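/- (O(1/t) rate of the PC-algorithm I with outer perturbations.) Let ν ∈ (0,1), γ ∈ (0,2), and let {x^k}, {y^k}, {β_k}, {e1^k}, {e2^k}, {ρ_k}, {d^k} be generated by the PC-algorithm I with outer perturbations: for every k ≥ 0, β_k > 0; y^k = P_C(x^k − β_k F(x^k)) + e1^k; β_k‖F(x^k) − F(y^k − e1^k)‖ ≤ ν‖x^k − y^k + e1^k‖; d^k := (x^k − y^k + e1^k) − β_k(F(x^k) − F(y^k − e1^k)) ≠ 0; ρ_k := ⟨x^k − y^k + e1^k, d^k⟩/‖d^k‖²; x^{k+1} = x^k − γ ρ_k d^k + e2^k; and assume Σ_{k=0}^∞ ‖e2^k‖ < +∞ and {x^k} is bounded. For an integer t > 0 set Υ_t := Σ_{k=0}^t ρ_k β_k (assumed positive) and ŷ_t := (1/Υ_t) Σ_{k=0}^t ρ_k β_k (y^k − e1^k). Then for every x ∈ C, ⟨F(x), ŷ_t − x⟩ ≤ (1/(2γΥ_t))·(‖x − x^0‖² + 2M(x)), where M(x) := (sup_{k} ‖x^{k+1} − x‖)·Σ_{k=0}^∞ ‖e2^k‖. -/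

import Mathlib

open RealInnerProductSpace

set_option maxHeartbeats 1000000

theorem stmt_5 {H : Type*} [NormedAddCommGroup H] [InnerProductSpace ℝ H]
    [CompleteSpace H]
    (C : Set H) (hCne : C.Nonempty) (hCcl : IsClosed C) (hCcv : Convex ℝ C)
    (P : H → H) (hPmem : ∀ u : H, P u ∈ C)
    (hPchar : ∀ u : H, ∀ c ∈ C, ⟪u - P u, c - P u⟫ ≤ 0)
    (F : H → H) (hmono : ∀ u v : H, 0 ≤ ⟪F u - F v, u - v⟫)
    (L : ℝ) (hL : 0 < L) (hLip : ∀ u v : H, ‖F u - F v‖ ≤ L * ‖u - v‖)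
    (ν γ : ℝ) (hν : ν ∈ Set.Ioo (0 : ℝ) 1) (hγ : γ ∈ Set.Ioo (0 : ℝ) 2)
    (e1 e2 : ℕ → H) (he2 : Summable (fun k => ‖e2 k‖))
    (x y : ℕ → H) (β : ℕ → ℝ) (d : ℕ → H) (ρ : ℕ → ℝ)
    (hβpos : ∀ k, 0 < β k)
    (hy : ∀ k, y k = P (x k - β k • F (x k)) + e1 k)
    (hstep : ∀ k, β k * ‖F (x k) - F (y k - e1 k)‖ ≤ ν * ‖x k - y k + e1 k‖)
    (hd : ∀ k, d k = (x k - y k + e1 k) - β k • (F (x k) - F (y k - e1 k)))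
    (hdne : ∀ k, d k ≠ 0)
    (hρ : ∀ k, ρ k = ⟪x k - y k + e1 k, d k⟫ / ‖d k‖ ^ 2)
    (hx : ∀ k, x (k + 1) = x k - (γ * ρ k) • d k + e2 k)
    (hbdd : ∃ R : ℝ, ∀ k, ‖x k‖ ≤ R)
    (t : ℕ) (ht : 0 < t)
    (hΥ : 0 < ∑ k ∈ Finset.range (t + 1), ρ k * β k) :
    ∀ z ∈ C,
      ⟪F z, ((∑ k ∈ Finset.range (t + 1), ρ k * β k)⁻¹ •
          ∑ k ∈ Finset.range (t + 1), (ρ k * β k) • (y k - e1 k)) - z⟫ ≤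
        (1 / (2 * γ * ∑ k ∈ Finset.range (t + 1), ρ k * β k)) *
          (‖z - x 0‖ ^ 2 +
            2 * ((⨆ k : ℕ, ‖x (k + 1) - z‖) * ∑' k : ℕ, ‖e2 k‖)) := by
  intro z hz
  obtain ⟨R, hR⟩ := hbdd
  obtain ⟨hν0, hν1⟩ := hν
  obtain ⟨hγ0, hγ2⟩ := hγ
  set S : ℝ := ⨆ k : ℕ, ‖x (k + 1) - z‖ with hSdef
  set w : ℕ → H := fun k => y k - e1 k with hwdef
  have hwP : ∀ k, w k = P (x k - β k • F (x k)) := by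
    intro k; simp only [hwdef, hy k]; abel
  have hs : ∀ k, x k - y k + e1 k = x k - w k := by
    intro k; simp only [hwdef]; abel
  have hd' : ∀ k, d k = (x k - w k) - β k • (F (x k) - F (w k)) := by
    intro k; rw [hd k, hs k]
  have hdk2 : ∀ k, (0:ℝ) < ‖d k‖ ^ 2 := fun k => pow_pos (norm_pos_iff.mpr (hdne k)) 2
  have hρ' : ∀ k, ρ k = ⟪x k - w k, d k⟫ / ‖d k‖ ^ 2 := by
    intro k; rw [hρ k, hs k]
  have hsdlow : ∀ k, (1 - ν) * ‖x k - w k‖ ^ 2 ≤ ⟪x k - w k, d k⟫ := by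
    intro k
    have h1 : β k * ‖F (x k) - F (w k)‖ ≤ ν * ‖x k - w k‖ := by
      have h := hstep k; rw [hs k] at h; exact h
    have h2 : ⟪x k - w k, d k⟫ = ‖x k - w k‖ ^ 2 - β k * ⟪x k - w k, F (x k) - F (w k)⟫ := by
      rw [hd' k, inner_sub_right, real_inner_smul_right, real_inner_self_eq_norm_sq]
    have h3 : ⟪x k - w k, F (x k) - F (w k)⟫ ≤ ‖x k - w k‖ * ‖F (x k) - F (w k)‖ :=
      real_inner_le_norm _ _
    nlinarith [mul_le_mul_of_nonneg_left h3 (hβpos k).le,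
      mul_le_mul_of_nonneg_left h1 (norm_nonneg (x k - w k))]
  have hρ0 : ∀ k, 0 ≤ ρ k := by
    intro k
    rw [hρ' k]
    apply div_nonneg _ (hdk2 k).le
    refine le_trans ?_ (hsdlow k)
    have h0 : (0:ℝ) ≤ 1 - ν := by linarith
    exact mul_nonneg h0 (pow_nonneg (norm_nonneg _) 2)
  have hbdd' : BddAbove (Set.range fun k : ℕ => ‖x (k + 1) - z‖) := by
    refine ⟨R + ‖z‖, ?_⟩
    rintro _ ⟨k, rfl⟩
    calc ‖x (k + 1) - z‖ ≤ ‖x (k + 1)‖ + ‖z‖ := norm_sub_le _ _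
    _ ≤ R + ‖z‖ := by linarith [hR (k + 1)]
  have hSle : ∀ k, ‖x (k + 1) - z‖ ≤ S := fun k => le_ciSup hbdd' k
  have hS0 : 0 ≤ S := le_trans (norm_nonneg _) (hSle 0)
  have key : ∀ k, 2 * γ * ((ρ k * β k) * ⟪F z, w k - z⟫) ≤
      ‖x k - z‖ ^ 2 - ‖x (k + 1) - z‖ ^ 2 + 2 * (‖e2 k‖ * S) := by
    intro k
    have hsd : ⟪x k - w k, d k⟫ = ρ k * ‖d k‖ ^ 2 := by
      rw [hρ' k, div_mul_cancel₀ _ (hdk2 k).ne']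
    have hproj : ⟪(x k - β k • F (x k)) - w k, z - w k⟫ ≤ 0 := by
      rw [hwP k]; exact hPchar _ z hz
    have hmon : 0 ≤ ⟪F (w k) - F z, w k - z⟫ := hmono _ _
    have hdecomp : d k = ((x k - β k • F (x k)) - w k) + β k • F (w k) := by
      rw [hd' k, smul_sub]; abel
    have e1' : ⟪x k - z, d k⟫ = ⟪x k - w k, d k⟫ + ⟪w k - z, d k⟫ := by
      rw [← inner_add_left]
      congr 1
      abel
    have e2' : ⟪w k - z, d k⟫ = ⟪w k - z, (x k - β k • F (x k)) - w k⟫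
        + β k * ⟪w k - z, F (w k)⟫ := by
      rw [hdecomp, inner_add_right, real_inner_smul_right]
    have e3 : ⟪w k - z, (x k - β k • F (x k)) - w k⟫ =
        -⟪(x k - β k • F (x k)) - w k, z - w k⟫ := by
      rw [show w k - z = -(z - w k) by abel, inner_neg_left, real_inner_comm]
    have e4 : β k * ⟪F z, w k - z⟫ ≤ β k * ⟪w k - z, F (w k)⟫ := by
      apply mul_le_mul_of_nonneg_left _ (hβpos k).le
      rw [inner_sub_left] at hmon
      have hcomm : ⟪w k - z, F (w k)⟫ = ⟪F (w k), w k - z⟫ := real_inner_comm _ _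
      linarith
    have hwzd : ρ k * ‖d k‖ ^ 2 + β k * ⟪F z, w k - z⟫ ≤ ⟪x k - z, d k⟫ := by
      linarith
    have hx1 : x (k + 1) - z = ((x k - z) - (γ * ρ k) • d k) + e2 k := by
      rw [hx k]; abel
    have h1 : ‖x (k + 1) - z‖ ^ 2 = ‖(x k - z) - (γ * ρ k) • d k‖ ^ 2
        + 2 * ⟪(x k - z) - (γ * ρ k) • d k, e2 k⟫ + ‖e2 k‖ ^ 2 := by
      rw [hx1]; exact norm_add_sq_real _ _
    have h2 : ‖(x k - z) - (γ * ρ k) • d k‖ ^ 2 = ‖x k - z‖ ^ 2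
        - 2 * ((γ * ρ k) * ⟪x k - z, d k⟫) + (γ * ρ k) ^ 2 * ‖d k‖ ^ 2 := by
      rw [norm_sub_sq_real, real_inner_smul_right, norm_smul, mul_pow,
        Real.norm_eq_abs, sq_abs]
    have h3 : ⟪(x k - z) - (γ * ρ k) • d k, e2 k⟫ = ⟪x (k + 1) - z, e2 k⟫ - ‖e2 k‖ ^ 2 := by
      rw [hx1, inner_add_left, real_inner_self_eq_norm_sq]
      ring
    have hCS : ⟪x (k + 1) - z, e2 k⟫ ≤ ‖e2 k‖ * S := by
      calc ⟪x (k + 1) - z, e2 k⟫ ≤ ‖x (k + 1) - z‖ * ‖e2 k‖ := real_inner_le_norm _ _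
      _ ≤ S * ‖e2 k‖ := mul_le_mul_of_nonneg_right (hSle k) (norm_nonneg _)
      _ = ‖e2 k‖ * S := mul_comm _ _
    have h5 : 2 * (γ * ρ k) * (ρ k * ‖d k‖ ^ 2 + β k * ⟪F z, w k - z⟫) ≤
        2 * (γ * ρ k) * ⟪x k - z, d k⟫ := by
      apply mul_le_mul_of_nonneg_left hwzd
      have := mul_nonneg hγ0.le (hρ0 k)
      linarith
    nlinarith [h1, h2, h3, hCS, h5, sq_nonneg ‖e2 k‖,
      mul_nonneg (mul_nonneg (mul_nonneg (sub_nonneg.mpr hγ2.le) hγ0.le)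
        (sq_nonneg (ρ k))) (hdk2 k).le]
  have h1 : 2 * γ * (∑ k ∈ Finset.range (t + 1), (ρ k * β k) * ⟪F z, w k - z⟫) ≤
      ∑ k ∈ Finset.range (t + 1),
        (‖x k - z‖ ^ 2 - ‖x (k + 1) - z‖ ^ 2 + 2 * (‖e2 k‖ * S)) := by
    rw [Finset.mul_sum]
    exact Finset.sum_le_sum fun k _ => key k
  have h2 : ∑ k ∈ Finset.range (t + 1), (‖x k - z‖ ^ 2 - ‖x (k + 1) - z‖ ^ 2) =
      ‖x 0 - z‖ ^ 2 - ‖x (t + 1) - z‖ ^ 2 :=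
    Finset.sum_range_sub' (fun k => ‖x k - z‖ ^ 2) (t + 1)
  have h3 : ∑ k ∈ Finset.range (t + 1), ‖e2 k‖ ≤ ∑' k, ‖e2 k‖ :=
    Summable.sum_le_tsum _ (fun k _ => norm_nonneg _) he2
  have h4 : ∑ k ∈ Finset.range (t + 1),
      (‖x k - z‖ ^ 2 - ‖x (k + 1) - z‖ ^ 2 + 2 * (‖e2 k‖ * S)) =
      (‖x 0 - z‖ ^ 2 - ‖x (t + 1) - z‖ ^ 2) +
        (2 * S) * ∑ k ∈ Finset.range (t + 1), ‖e2 k‖ := by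
    rw [Finset.sum_add_distrib, h2, Finset.mul_sum]
    congr 1
    exact Finset.sum_congr rfl fun k _ => by ring
  have hsum : 2 * γ * (∑ k ∈ Finset.range (t + 1), (ρ k * β k) * ⟪F z, w k - z⟫) ≤
      ‖z - x 0‖ ^ 2 + 2 * (S * ∑' k, ‖e2 k‖) := by
    have h6 : (2 * S) * ∑ k ∈ Finset.range (t + 1), ‖e2 k‖ ≤ (2 * S) * ∑' k, ‖e2 k‖ :=
      mul_le_mul_of_nonneg_left h3 (by positivity)
    have h7 : ‖x 0 - z‖ = ‖z - x 0‖ := norm_sub_rev _ _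
    rw [h4] at h1
    rw [h7] at h1
    nlinarith [sq_nonneg ‖x (t + 1) - z‖]
  have hrw : ((∑ k ∈ Finset.range (t + 1), ρ k * β k)⁻¹ •
        ∑ k ∈ Finset.range (t + 1), (ρ k * β k) • (w k)) - z =
      (∑ k ∈ Finset.range (t + 1), ρ k * β k)⁻¹ •
        ∑ k ∈ Finset.range (t + 1), (ρ k * β k) • (w k - z) := by
    have : ∑ k ∈ Finset.range (t + 1), (ρ k * β k) • (w k - z) =
        (∑ k ∈ Finset.range (t + 1), (ρ k * β k) • (w k)) -
          (∑ k ∈ Finset.range (t + 1), ρ k * β k) • z := by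
      rw [Finset.sum_smul]
      rw [← Finset.sum_sub_distrib]
      exact Finset.sum_congr rfl fun k _ => by rw [smul_sub]
    rw [this, smul_sub, smul_smul, inv_mul_cancel₀ hΥ.ne', one_smul]
  have hgoal : ⟪F z, ((∑ k ∈ Finset.range (t + 1), ρ k * β k)⁻¹ •
      ∑ k ∈ Finset.range (t + 1), (ρ k * β k) • (w k)) - z⟫ =
      (∑ k ∈ Finset.range (t + 1), ρ k * β k)⁻¹ *
        ∑ k ∈ Finset.range (t + 1), (ρ k * β k) * ⟪F z, w k - z⟫ := by
    rw [hrw, real_inner_smul_right, inner_sum]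
    congr 1
    exact Finset.sum_congr rfl fun k _ => real_inner_smul_right _ _ _
  show ⟪F z, ((∑ k ∈ Finset.range (t + 1), ρ k * β k)⁻¹ •
      ∑ k ∈ Finset.range (t + 1), (ρ k * β k) • (w k)) - z⟫ ≤ _
  rw [hgoal]
  have hfin : ∑ k ∈ Finset.range (t + 1), (ρ k * β k) * ⟪F z, w k - z⟫ ≤
      (‖z - x 0‖ ^ 2 + 2 * (S * ∑' k, ‖e2 k‖)) / (2 * γ) := by
    rw [le_div_iff₀ (by positivity)]
    linarith
  calc (∑ k ∈ Finset.range (t + 1), ρ k * β k)⁻¹ *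
      ∑ k ∈ Finset.range (t + 1), (ρ k * β k) * ⟪F z, w k - z⟫ ≤
      (∑ k ∈ Finset.range (t + 1), ρ k * β k)⁻¹ *
        ((‖z - x 0‖ ^ 2 + 2 * (S * ∑' k, ‖e2 k‖)) / (2 * γ)) :=
      mul_le_mul_of_nonneg_left hfin (inv_nonneg.mpr hΥ.le)
  _ = (1 / (2 * γ * ∑ k ∈ Finset.range (t + 1), ρ k * β k)) *
      (‖z - x 0‖ ^ 2 + 2 * (S * ∑' k, ‖e2 k‖)) := by
    rw [div_eq_mul_inv, one_div, mul_inv]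
    ring
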